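/- Let t be real with |t| > 1 and w a complex number with |w| ≥ 1/2 and |w| ≤ 1. If T ≥ e^{2π}, then ∫_1^T |1 + w·y^{-2it}|² dy/y ≫ 1 with an absolute implied constant. -/

import Mathlib

open Complex

lemma abs_sq_one_add_mul (w z : ℂ) (hz : ‖z‖ = 1) :
    (‖1 + w*z‖)^2 = 1 + (‖w‖)^2 + 2*(w*z).re := by
  rw [Complex.sq_norm, Complex.normSq_add, Complex.sq_norm, Complex.normSq_mul]
  have : Complex.normSq z = 1 := by rw [← Complex.sq_norm, hz]; norm_num
  simp [this, Complex.normSq_one]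

lemma osc_deriv (t : ℝ) (w : ℂ) (ht : t ≠ 0) (y : ℝ) (hy : 0 < y) :
    HasDerivAt (fun y : ℝ =>
        ((w * Complex.exp (-(2 * (t:ℂ) * (Real.log y : ℂ)) * I)) / (-(2*(t:ℂ))*I)).re)
      ((w * Complex.exp (-(2 * (t:ℂ) * (Real.log y : ℂ)) * I)).re / y) y := by
  have hlog : HasDerivAt Real.log (1/y) y := by
    simpa [one_div] using Real.hasDerivAt_log hy.ne'
  have hlogC : HasDerivAt (fun y : ℝ => ((Real.log y : ℝ) : ℂ)) ((1/y : ℝ) : ℂ) y :=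
    hlog.ofReal_comp
  have hc : HasDerivAt (fun y : ℝ => -(2 * (t:ℂ) * (Real.log y : ℂ)) * I)
      (-(2 * (t:ℂ) * ((1/y : ℝ) : ℂ)) * I) y :=
    (((hlogC.const_mul (2 * (t:ℂ))).neg).mul_const I)
  have hexp := hc.cexp
  have hF := ((hexp.const_mul w).div_const (-(2*(t:ℂ))*I))
  have hre := Complex.reCLM.hasFDerivAt.comp_hasDerivAt y hF
  convert hre using 1
  · rfl
  · rfl
  · rfl
  have hyne : (y:ℂ) ≠ 0 := by exact_mod_cast hy.ne'
  have hI : I ≠ 0 := Complex.I_ne_zero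
  have htC : (t:ℂ) ≠ 0 := by exact_mod_cast ht
  rw [← Complex.div_ofReal_re]
  congr 1
  field_simp
  ring_nf
  simp [hyne]

/-- Let `t` real with `|t| > 1` and `w` complex with `1/2 ≤ |w| ≤ 1`. If `T ≥ e^{2π}`,
then `∫_1^T |1 + w·y^{-2it}|² dy/y ≫ 1` with an absolute implied constant. -/
theorem stmt_11 : ∃ C : ℝ, 0 < C ∧ ∀ (t : ℝ) (w : ℂ) (T : ℝ),
    1 < |t| → 1/2 ≤ ‖w‖ → ‖w‖ ≤ 1 → Real.exp (2*Real.pi) ≤ T →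
    C ≤ ∫ y in (1:ℝ)..T,
        (‖1 + w * Complex.exp (-(2 * t * Real.log y) * I)‖)^2 / y := by
  refine ⟨1, one_pos, ?_⟩
  intro t w T ht hw1 hw2 hT
  have ht0 : t ≠ 0 := by
    intro h; rw [h] at ht; simp at ht; linarith
  have hT1 : (1:ℝ) ≤ T := le_trans (Real.one_le_exp (by positivity)) hT
  set a : ℝ := ‖w‖ with ha
  set E : ℝ → ℂ := fun y => Complex.exp (-(2 * (t:ℂ) * (Real.log y : ℂ)) * I) with hE
  have habsE : ∀ y : ℝ, ‖E y‖ = 1 := by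
    intro y
    have : -(2 * (t:ℂ) * (Real.log y : ℂ)) * I = ((-(2 * t * Real.log y) : ℝ) : ℂ) * I := by
      push_cast; ring
    rw [hE]; simp only [this, Complex.norm_exp_ofReal_mul_I]
  set F : ℝ → ℝ := fun y => (1 + a^2) * Real.log y + 2 * ((w * E y) / (-(2*(t:ℂ))*I)).re with hF
  have hderiv : ∀ y ∈ Set.uIcc (1:ℝ) T,
      HasDerivAt F ((‖1 + w * Complex.exp (-(2 * t * Real.log y) * I)‖)^2 / y) y := by
    intro y hy
    rw [Set.uIcc_of_le hT1] at hy
    have hy0 : 0 < y := lt_of_lt_of_le one_pos hy.1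
    have h1 : HasDerivAt (fun y => (1 + a^2) * Real.log y) ((1 + a^2) * (1/y)) y := by
      simpa [one_div] using (Real.hasDerivAt_log hy0.ne').const_mul (1 + a^2)
    have h2 := osc_deriv t w ht0 y hy0
    have := h1.add ((h2.const_mul 2))
    convert this using 1
    · rfl
    · rfl
    · rfl
    rw [abs_sq_one_add_mul w (E y) (habsE y)]
    generalize (w * E y).re = r
    field_simp
    rw [ha]
  have hcont : ContinuousOn
      (fun y => (‖1 + w * Complex.exp (-(2 * t * Real.log y) * I)‖)^2 / y)
      (Set.uIcc (1:ℝ) T) := by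
    have hlogc : ContinuousOn Real.log (Set.uIcc (1:ℝ) T) := by
      apply Real.continuousOn_log.mono
      intro y hy
      rw [Set.uIcc_of_le hT1] at hy
      simp only [Set.mem_compl_iff, Set.mem_singleton_iff]
      intro h; rw [h] at hy; linarith [hy.1]
    have h2 : ContinuousOn (fun y : ℝ => (1 + w * Complex.exp (-(2 * (t:ℂ) * (Real.log y : ℂ)) * I))) (Set.uIcc (1:ℝ) T) := by
      apply continuousOn_const.add
      apply continuousOn_const.mul
      apply Complex.continuous_exp.comp_continuousOn
      apply ContinuousOn.mul _ continuousOn_const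
      apply ContinuousOn.neg
      exact continuousOn_const.mul (Complex.continuous_ofReal.comp_continuousOn hlogc)
    apply ContinuousOn.div
    · exact (continuous_norm.comp_continuousOn h2).pow 2
    · exact continuousOn_id
    · intro y hy
      rw [Set.uIcc_of_le hT1] at hy
      intro h; rw [h] at hy; linarith [hy.1]
  rw [intervalIntegral.integral_eq_sub_of_hasDerivAt hderiv hcont.intervalIntegrable]
  have hbound : ∀ y : ℝ, |((w * E y) / (-(2*(t:ℂ))*I)).re| ≤ 1/2 := by
    intro y
    refine le_trans (Complex.abs_re_le_norm _) ?_
    have h1 : -(2*(t:ℂ)) = ((-(2*t) : ℝ) : ℂ) := by push_cast; ring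
    rw [norm_div, norm_mul, habsE, mul_one, norm_mul, h1, Complex.norm_real, Real.norm_eq_abs, Complex.norm_I,
      mul_one, abs_neg, abs_mul, _root_.abs_two]
    rw [div_le_iff₀ (by linarith)]
    nlinarith
  have hlogT : 2*Real.pi ≤ Real.log T := by
    rw [← Real.log_exp (2*Real.pi)]
    exact Real.log_le_log (Real.exp_pos _) hT
  have hpi := Real.pi_gt_three
  have ha2 : 1/4 ≤ a^2 := by nlinarith [norm_nonneg w]
  have hbT := hbound T
  have hb1 := hbound 1
  rw [abs_le] at hbT hb1
  simp only [hF, Real.log_one, mul_zero, zero_add]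
  nlinarith [hbT.1, hbT.2, hb1.1, hb1.2, hlogT, ha2]
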